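/- arXiv:math/9205201 — 2 statements merged into one kernel-verified Lean document; each statement's English description precedes it below -/
import Mathlib

section
/- Suppose A ⊆ ω^ω is the projection p[T] of a tree T on ω × κ with |T| ≤ ℵ₁. If |A| > ℵ₁ then A contains a perfect set. -/
open Cardinal

namespace Paper

/-- Formulas in the language of set theory with one unary predicate symbol. -/
inductive Fml : Type
  | mem : ℕ → ℕ → Fml
  | eq : ℕ → ℕ → Fml
  | pred : ℕ → Fml
  | not : Fml → Fml
  | and : Fml → Fml → Fml
  | ex : ℕ → Fml → Fml

/-- Satisfaction of a formula in the structure `(M, ∈, A)`, quantifiers relativized to `M`. -/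
def Realize (M A : ZFSet) : Fml → (ℕ → ZFSet) → Prop
  | .mem i j, v => v i ∈ v j
  | .eq i j, v => v i = v j
  | .pred i, v => v i ∈ A
  | .not φ, v => ¬ Realize M A φ v
  | .and φ ψ, v => Realize M A φ v ∧ Realize M A ψ v
  | .ex i φ, v => ∃ z : ZFSet, z ∈ M ∧ Realize M A φ (Function.update v i z)

/-- The definable (with parameters) power set of `M`, in the language with predicate `A`. -/
noncomputable def defSet (A M : ZFSet) : ZFSet :=
  (ZFSet.powerset M).sep fun y =>
    ∃ (φ : Fml) (v : ℕ → ZFSet), (∀ n, v n ∈ M) ∧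
      y = M.sep fun z => Realize M A φ (Function.update v 0 z)

/-- The constructible hierarchy relative to the predicate `A`. -/
noncomputable def LSet (A : ZFSet) (α : Ordinal.{0}) : ZFSet :=
  ZFSet.sUnion (ZFSet.range fun β : α.ToType =>
    defSet A (LSet A ((@Ordinal.ToType.mk α).symm β)))
termination_by α
decreasing_by exact ((@Ordinal.ToType.mk α).symm β).2

/-- `x` belongs to the inner model `L[A]`. -/
def inL (A x : ZFSet) : Prop := ∃ α : Ordinal.{0}, x ∈ LSet A α

/-- The von Neumann ordinal corresponding to an ordinal. -/
noncomputable def ordZF (α : Ordinal.{0}) : ZFSet :=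
  ZFSet.range fun β : α.ToType => ordZF ((@Ordinal.ToType.mk α).symm β)
termination_by α
decreasing_by exact ((@Ordinal.ToType.mk α).symm β).2

/-- The real `x : ℕ → ℕ` coded as a ZF set (its graph). -/
noncomputable def realZF (x : ℕ → ℕ) : ZFSet :=
  ZFSet.range fun n : ℕ => ZFSet.pair (ordZF n) (ordZF (x n))

/-- The set of reals (as coded in `ZFSet`) of the inner model `L[A]`. -/
def realsOfL (A : ZFSet) : Set ZFSet :=
  {y | y ∈ ZFSet.powerset ZFSet.omega ∧ inL A y}

/-- A tree on `ω × κ`: a length-matched, prefix-closed set of pairs of finite sequences. -/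
def IsTreeOn (κ : Ordinal.{0}) (T : Set (List ℕ × List κ.ToType)) : Prop :=
  ∀ p ∈ T, p.1.length = p.2.length ∧ ∀ n : ℕ, (p.1.take n, p.2.take n) ∈ T

/-- The projection `p[T]` of a tree on `ω × κ`. -/
def projT (κ : Ordinal.{0}) (T : Set (List ℕ × List κ.ToType)) : Set (ℕ → ℕ) :=
  {x | ∃ f : ℕ → κ.ToType, ∀ n : ℕ,
    ((List.ofFn fun i : Fin n => x i), (List.ofFn fun i : Fin n => f i)) ∈ T}

/-- Coding of a list as a ZF set, given a coding of the entries. -/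
noncomputable def listZF {β : Type} (g : β → ZFSet) : List β → ZFSet
  | [] => ∅
  | a :: l => ZFSet.pair (g a) (listZF g l)

/-- Code a tree on `ω × κ` as a set of ordinals-based codes, a `ZFSet`. -/
noncomputable def treeZF (κ : Ordinal.{0}) (T : Set (List ℕ × List κ.ToType)) : ZFSet :=
  ZFSet.range fun p : T =>
    ZFSet.pair (listZF (fun n : ℕ => ordZF n) p.1.1)
      (listZF (fun b : κ.ToType => ordZF ((@Ordinal.ToType.mk κ).symm b).1) p.1.2)

/-- The cumulative hierarchy. -/
noncomputable def Vrank (α : Ordinal.{0}) : ZFSet :=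
  ZFSet.sUnion (ZFSet.range fun β : α.ToType =>
    ZFSet.powerset (Vrank ((@Ordinal.ToType.mk α).symm β)))
termination_by α
decreasing_by exact ((@Ordinal.ToType.mk α).symm β).2

/-- `N` is an elementary submodel of `M` (in the pure language of set theory). -/
def ElemSub (N M : ZFSet) : Prop :=
  N ⊆ M ∧ ∀ (φ : Fml) (v : ℕ → ZFSet), (∀ n, v n ∈ N) →
    (Realize N ∅ φ v ↔ Realize M ∅ φ v)


private lemma ofFn_mono {α : Type*} (F : ℕ → α) {m n : ℕ} (h : m ≤ n) :
    (List.ofFn fun i : Fin m => F i) <+: (List.ofFn fun i : Fin n => F i) := by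
  rw [List.prefix_iff_eq_take]
  apply List.ext_getElem
  · simp [Nat.min_eq_left h, h]
  · intro i h1 h2
    simp

variable {κ : Ordinal.{0}}

/-- The node of the branch `(x, f)` at level `n`. -/
private def nodeOf (x : ℕ → ℕ) (f : ℕ → κ.ToType) (n : ℕ) : List ℕ × List κ.ToType :=
  (List.ofFn fun i : Fin n => x i, List.ofFn fun i : Fin n => f i)

/-- Node extension. -/
private def extN (p q : List ℕ × List κ.ToType) : Prop := p.1 <+: q.1 ∧ p.2 <+: q.2

private lemma extN_trans {p q r : List ℕ × List κ.ToType} (h1 : extN p q) (h2 : extN q r) :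
    extN p r := ⟨h1.1.trans h2.1, h1.2.trans h2.2⟩

private lemma nodeOf_len (x : ℕ → ℕ) (f : ℕ → κ.ToType) (n : ℕ) :
    (nodeOf x f n).1.length = n := by simp [nodeOf]

private lemma nodeOf_mono (x : ℕ → ℕ) (f : ℕ → κ.ToType) {m n : ℕ} (h : m ≤ n) :
    extN (nodeOf x f m) (nodeOf x f n) := ⟨ofFn_mono x h, ofFn_mono f h⟩

/-- The reals coming from a branch through `p`. -/
private def Bset (T : Set (List ℕ × List κ.ToType)) (p : List ℕ × List κ.ToType) :
    Set (ℕ → ℕ) :=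
  {x | ∃ f : ℕ → κ.ToType, (∀ n, nodeOf x f n ∈ T) ∧ nodeOf x f p.1.length = p}

/-- Nodes over which more than `ℵ₁` reals live. -/
private def Sset (T : Set (List ℕ × List κ.ToType)) : Set (List ℕ × List κ.ToType) :=
  {p | p ∈ T ∧ Cardinal.aleph 1 < Cardinal.mk (Bset T p)}

private lemma mem_Bset {T : Set (List ℕ × List κ.ToType)} {x : ℕ → ℕ} {f : ℕ → κ.ToType}
    (hb : ∀ n, nodeOf x f n ∈ T) (n : ℕ) : x ∈ Bset T (nodeOf x f n) := by
  refine ⟨f, hb, ?_⟩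
  rw [nodeOf_len]

private lemma Bset_root {T : Set (List ℕ × List κ.ToType)} :
    Bset T (([], []) : List ℕ × List κ.ToType) = projT κ T := by
  ext x
  constructor
  · rintro ⟨f, hf, -⟩
    exact ⟨f, hf⟩
  · rintro ⟨f, hf⟩
    exact ⟨f, hf, by simp [nodeOf]⟩

private lemma root_mem_Sset {T : Set (List ℕ × List κ.ToType)} (hT : IsTreeOn κ T)
    (hbig : Cardinal.aleph 1 < Cardinal.mk (projT κ T)) :
    (([], []) : List ℕ × List κ.ToType) ∈ Sset T := by
  have hne : (projT κ T).Nonempty := by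
    rw [← Set.nonempty_coe_sort, ← Cardinal.mk_ne_zero_iff]
    intro h0
    rw [h0] at hbig
    exact absurd hbig (by simp)
  obtain ⟨x, f, hf⟩ := hne
  constructor
  · have := hf 0
    simpa using this
  · rw [Bset_root]; exact hbig

/-- The key splitting lemma: above any node of `Sset T`, there are two nodes of `Sset T`
with incomparable first coordinates. -/
private lemma splitting {T : Set (List ℕ × List κ.ToType)} (hT : IsTreeOn κ T)
    (hcard : Cardinal.mk T ≤ Cardinal.aleph 1) {p : List ℕ × List κ.ToType}
    (hp : p ∈ Sset T) :
    ∃ q ∈ Sset T, ∃ r ∈ Sset T, extN p q ∧ extN p r ∧ ¬ (q.1 <+: r.1) ∧ ¬ (r.1 <+: q.1) := by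
  by_contra hcon
  push_neg at hcon
  -- the set of reals through `p` whose branch stays in `Sset T`
  set G : Set (ℕ → ℕ) := {x | ∃ f : ℕ → κ.ToType, (∀ n, nodeOf x f n ∈ T) ∧
    nodeOf x f p.1.length = p ∧ ∀ n, p.1.length ≤ n → nodeOf x f n ∈ Sset T} with hGdef
  set Dd : Set (List ℕ × List κ.ToType) := {q | q ∈ T ∧ extN p q ∧ q ∉ Sset T} with hDdef
  have hcover : Bset T p ⊆ G ∪ ⋃ q ∈ Dd, Bset T q := by
    rintro x ⟨f, hbr, hnode⟩
    by_cases hall : ∀ n, p.1.length ≤ n → nodeOf x f n ∈ Sset T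
    · exact Or.inl ⟨f, hbr, hnode, hall⟩
    · push_neg at hall
      obtain ⟨n, hn, hnotin⟩ := hall
      refine Or.inr (Set.mem_biUnion ?_ (mem_Bset hbr n))
      refine ⟨hbr n, ?_, hnotin⟩
      rw [← hnode]
      exact nodeOf_mono x f hn
  have hG : G.Subsingleton := by
    rintro x ⟨f, hbx, hnx, hSx⟩ y ⟨g, hby, hny, hSy⟩
    by_contra hxy
    obtain ⟨m, hm⟩ : ∃ m, x m ≠ y m := by
      by_contra h
      push_neg at h
      exact hxy (funext h)
    set n := max p.1.length (m + 1) with hndef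
    have hn1 : p.1.length ≤ n := le_max_left _ _
    have hn2 : m < n := lt_of_lt_of_le (Nat.lt_succ_self m) (le_max_right _ _)
    have hq := hSx n hn1
    have hr := hSy n hn1
    have hext1 : extN p (nodeOf x f n) := by rw [← hnx]; exact nodeOf_mono x f hn1
    have hext2 : extN p (nodeOf y g n) := by rw [← hny]; exact nodeOf_mono y g hn1
    have hlen : (nodeOf x f n).1.length = (nodeOf y g n).1.length := by
      rw [nodeOf_len, nodeOf_len]
    have hne : (nodeOf x f n).1 ≠ (nodeOf y g n).1 := by
      intro he
      apply hm
      have := List.getElem_of_eq he (by rw [nodeOf_len]; exact hn2)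
      simpa [nodeOf] using this
    by_cases hpre : (nodeOf x f n).1 <+: (nodeOf y g n).1
    · exact hne (hpre.eq_of_length hlen)
    · have := hcon _ hq _ hr hext1 hext2 hpre
      exact hne ((this.eq_of_length hlen.symm).symm)
  have hbound : Cardinal.mk (Bset T p) ≤ Cardinal.aleph 1 := by
    have h1 : Cardinal.mk G ≤ 1 := Cardinal.mk_le_one_iff_set_subsingleton.2 hG
    have h2 : Cardinal.mk (⋃ q ∈ Dd, Bset T q) ≤ Cardinal.aleph 1 := by
      refine le_trans (Cardinal.mk_biUnion_le _ _) ?_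
      have hDT : Cardinal.mk Dd ≤ Cardinal.aleph 1 := by
        refine le_trans (Cardinal.mk_le_mk_of_subset ?_) hcard
        intro q hq; exact hq.1
      have hsup : (⨆ q : Dd, Cardinal.mk (Bset T q)) ≤ Cardinal.aleph 1 := by
        refine ciSup_le' ?_
        rintro ⟨q, hqT, hqext, hqS⟩
        by_contra hlt
        exact hqS ⟨hqT, lt_of_not_ge hlt⟩
      calc Cardinal.mk Dd * ⨆ q : Dd, Cardinal.mk (Bset T q)
          ≤ Cardinal.aleph 1 * Cardinal.aleph 1 := mul_le_mul' hDT hsup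
        _ = Cardinal.aleph 1 := Cardinal.mul_eq_self (aleph0_le_aleph 1)
    calc Cardinal.mk (Bset T p) ≤ Cardinal.mk ↥(G ∪ ⋃ q ∈ Dd, Bset T q) :=
          Cardinal.mk_le_mk_of_subset hcover
      _ ≤ Cardinal.mk G + Cardinal.mk (⋃ q ∈ Dd, Bset T q) := Cardinal.mk_union_le _ _
      _ ≤ 1 + Cardinal.aleph 1 := add_le_add h1 h2
      _ = Cardinal.aleph 1 := Cardinal.add_eq_right (aleph0_le_aleph 1)
          (one_lt_aleph0.le.trans (aleph0_le_aleph 1))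
  exact absurd hp.2 (not_lt.2 hbound)

/-- `F` picks, above each node of `Sset T`, two extensions in `Sset T` with
incomparable first coordinates. -/
private def goodF (T : Set (List ℕ × List κ.ToType))
    (F : (List ℕ × List κ.ToType) → (List ℕ × List κ.ToType) × (List ℕ × List κ.ToType)) :
    Prop :=
  ∀ p ∈ Sset T, (F p).1 ∈ Sset T ∧ (F p).2 ∈ Sset T ∧ extN p (F p).1 ∧ extN p (F p).2 ∧
    ¬ ((F p).1.1 <+: (F p).2.1) ∧ ¬ ((F p).2.1 <+: (F p).1.1)

private def Dfun
    (F : (List ℕ × List κ.ToType) → (List ℕ × List κ.ToType) × (List ℕ × List κ.ToType))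
    (g : ℕ → Bool) : ℕ → List ℕ × List κ.ToType
  | 0 => ([], [])
  | n + 1 => if g n then (F (Dfun F g n)).1 else (F (Dfun F g n)).2

variable {T : Set (List ℕ × List κ.ToType)}
  {F : (List ℕ × List κ.ToType) → (List ℕ × List κ.ToType) × (List ℕ × List κ.ToType)}

private lemma D_mem (hroot : (([], []) : List ℕ × List κ.ToType) ∈ Sset T)
    (hF : goodF T F) (g : ℕ → Bool) : ∀ n, Dfun F g n ∈ Sset T := by
  intro n
  induction n with
  | zero => exact hroot
  | succ n ih =>
    have := hF _ ih
    by_cases h : g n <;> simp [Dfun, h, this.1, this.2.1]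

private lemma D_ext (hroot : (([], []) : List ℕ × List κ.ToType) ∈ Sset T)
    (hF : goodF T F) (g : ℕ → Bool) (n : ℕ) :
    extN (Dfun F g n) (Dfun F g (n + 1)) := by
  have := hF _ (D_mem hroot hF g n)
  by_cases h : g n <;> simp [Dfun, h, this.2.2.1, this.2.2.2.1]

private lemma D_len_lt (hroot : (([], []) : List ℕ × List κ.ToType) ∈ Sset T)
    (hF : goodF T F) (g : ℕ → Bool) (n : ℕ) :
    (Dfun F g n).1.length < (Dfun F g (n + 1)).1.length := by
  have hs := hF _ (D_mem hroot hF g n)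
  have hext := D_ext hroot hF g n
  refine lt_of_le_of_ne hext.1.length_le ?_
  intro hlen
  have heq : (Dfun F g n).1 = (Dfun F g (n + 1)).1 := hext.1.eq_of_length hlen
  by_cases h : g n
  · apply hs.2.2.2.2.1
    have h2 : (Dfun F g (n+1)).1 = (F (Dfun F g n)).1.1 := by simp [Dfun, h]
    rw [← h2, ← heq]
    exact hs.2.2.2.1.1
  · apply hs.2.2.2.2.2
    have h2 : (Dfun F g (n+1)).1 = (F (Dfun F g n)).2.1 := by simp [Dfun, h]
    rw [← h2, ← heq]
    exact hs.2.2.1.1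

private lemma D_len (hroot : (([], []) : List ℕ × List κ.ToType) ∈ Sset T)
    (hF : goodF T F) (g : ℕ → Bool) (n : ℕ) : n ≤ (Dfun F g n).1.length := by
  induction n with
  | zero => exact Nat.zero_le _
  | succ n ih => exact Nat.lt_of_le_of_lt ih (D_len_lt hroot hF g n)

private lemma D_chain (hroot : (([], []) : List ℕ × List κ.ToType) ∈ Sset T)
    (hF : goodF T F) (g : ℕ → Bool) {m n : ℕ} (h : m ≤ n) :
    extN (Dfun F g m) (Dfun F g n) := by
  induction n, h using Nat.le_induction with
  | base => exact ⟨List.prefix_refl _, List.prefix_refl _⟩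
  | succ n hmn ih =>
    have := D_ext hroot hF g n
    exact ⟨ih.1.trans this.1, ih.2.trans this.2⟩

private lemma D_agree {g h : ℕ → Bool} {n : ℕ} (hag : ∀ i < n, g i = h i) :
    Dfun F g n = Dfun F h n := by
  induction n with
  | zero => rfl
  | succ n ih =>
    have h1 : Dfun F g n = Dfun F h n := ih fun i hi => hag i (Nat.lt_succ_of_lt hi)
    have h2 : g n = h n := hag n (Nat.lt_succ_self n)
    simp [Dfun, h1, h2]

private def xseq
    (F : (List ℕ × List κ.ToType) → (List ℕ × List κ.ToType) × (List ℕ × List κ.ToType))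
    (g : ℕ → Bool) (m : ℕ) : ℕ := (Dfun F g (m + 1)).1.getD m 0

private def fseq
    (F : (List ℕ × List κ.ToType) → (List ℕ × List κ.ToType) × (List ℕ × List κ.ToType))
    (c : κ.ToType) (g : ℕ → Bool) (m : ℕ) : κ.ToType := (Dfun F g (m + 1)).2.getD m c

private lemma D_get (hroot : (([], []) : List ℕ × List κ.ToType) ∈ Sset T)
    (hF : goodF T F) (g : ℕ → Bool) (n : ℕ) (i : ℕ) (hi : i < (Dfun F g n).1.length) :
    (Dfun F g n).1[i] = xseq F g i := by
  have hi' : i < (Dfun F g (i + 1)).1.length := Nat.lt_of_lt_of_le (Nat.lt_succ_self i)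
    (D_len hroot hF g (i + 1))
  rw [xseq, List.getD_eq_getElem _ _ hi']
  rcases le_total (i + 1) n with h | h
  · exact ((D_chain hroot hF g h).1.getElem hi').symm
  · exact (D_chain hroot hF g h).1.getElem hi

private lemma D_len2 (hT : IsTreeOn κ T)
    (hroot : (([], []) : List ℕ × List κ.ToType) ∈ Sset T)
    (hF : goodF T F) (g : ℕ → Bool) (n : ℕ) :
    (Dfun F g n).2.length = (Dfun F g n).1.length :=
  ((hT _ (D_mem hroot hF g n).1).1).symm

private lemma D_get2 (hT : IsTreeOn κ T)
    (hroot : (([], []) : List ℕ × List κ.ToType) ∈ Sset T)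
    (hF : goodF T F) (c : κ.ToType) (g : ℕ → Bool) (n : ℕ) (i : ℕ)
    (hi : i < (Dfun F g n).2.length) :
    (Dfun F g n).2[i] = fseq F c g i := by
  have hi' : i < (Dfun F g (i + 1)).2.length := by
    rw [D_len2 hT hroot hF]
    exact Nat.lt_of_lt_of_le (Nat.lt_succ_self i) (D_len hroot hF g (i + 1))
  rw [fseq, List.getD_eq_getElem _ _ hi']
  rcases le_total (i + 1) n with h | h
  · exact ((D_chain hroot hF g h).2.getElem hi').symm
  · exact (D_chain hroot hF g h).2.getElem hi

private lemma D_node (hT : IsTreeOn κ T)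
    (hroot : (([], []) : List ℕ × List κ.ToType) ∈ Sset T)
    (hF : goodF T F) (c : κ.ToType) (g : ℕ → Bool) (n : ℕ) :
    nodeOf (xseq F g) (fseq F c g) n = ((Dfun F g n).1.take n, (Dfun F g n).2.take n) := by
  have hlen1 : n ≤ (Dfun F g n).1.length := D_len hroot hF g n
  have hlen2 : n ≤ (Dfun F g n).2.length := by rw [D_len2 hT hroot hF]; exact hlen1
  unfold nodeOf
  refine Prod.ext ?_ ?_
  · apply List.ext_getElem
    · simp [Nat.min_eq_left hlen1]
    · intro i h1 h2
      simp only [List.getElem_ofFn, List.getElem_take]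
      exact (D_get hroot hF g n i (by simp at h2; omega)).symm
  · apply List.ext_getElem
    · simp [Nat.min_eq_left hlen2]
    · intro i h1 h2
      simp only [List.getElem_ofFn, List.getElem_take]
      exact (D_get2 hT hroot hF c g n i (by simp at h2; omega)).symm

private lemma xseq_mem (hT : IsTreeOn κ T)
    (hroot : (([], []) : List ℕ × List κ.ToType) ∈ Sset T)
    (hF : goodF T F) (c : κ.ToType) (g : ℕ → Bool) :
    xseq F g ∈ projT κ T := by
  refine ⟨fseq F c g, fun n => ?_⟩
  have h1 : nodeOf (xseq F g) (fseq F c g) n ∈ T := by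
    rw [D_node hT hroot hF c g n]
    exact (hT _ (D_mem hroot hF g n).1).2 n
  exact h1

private lemma D_ofFn (hroot : (([], []) : List ℕ × List κ.ToType) ∈ Sset T)
    (hF : goodF T F) (g : ℕ → Bool) (n : ℕ) :
    (Dfun F g n).1 = List.ofFn (fun i : Fin ((Dfun F g n).1.length) => xseq F g i) := by
  apply List.ext_getElem
  · simp
  · intro i h1 h2
    simp only [List.getElem_ofFn]
    exact D_get hroot hF g n i h1

private lemma xseq_inj (hroot : (([], []) : List ℕ × List κ.ToType) ∈ Sset T)
    (hF : goodF T F) {g h : ℕ → Bool} (he : xseq F g = xseq F h) : g = h := by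
  have key : ∀ n, (∀ i, i < n → g i = h i) → g n = h n := by
    intro n ih
    by_contra hne
    have hD : Dfun F g n = Dfun F h n := D_agree ih
    have hpS := D_mem hroot hF g n
    have hs := hF _ hpS
    have hcomp : (Dfun F g (n+1)).1 <+: (Dfun F h (n+1)).1 ∨
        (Dfun F h (n+1)).1 <+: (Dfun F g (n+1)).1 := by
      rw [D_ofFn hroot hF g (n+1), D_ofFn hroot hF h (n+1), ← he]
      rcases le_total ((Dfun F g (n+1)).1.length) ((Dfun F h (n+1)).1.length) with hl | hl
      · exact Or.inl (ofFn_mono _ hl)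
      · exact Or.inr (ofFn_mono _ hl)
    have hgt : Dfun F g (n+1) = if g n then (F (Dfun F g n)).1 else (F (Dfun F g n)).2 := rfl
    have hht : Dfun F h (n+1) = if h n then (F (Dfun F g n)).1 else (F (Dfun F g n)).2 := by
      rw [hD]; rfl
    by_cases hg : g n
    · have hh : h n = false := by
        cases hn : h n
        · rfl
        · exact absurd (hg.trans hn.symm) hne
      rw [hgt, hht] at hcomp
      simp [hg, hh] at hcomp
      rcases hcomp with h1 | h1
      · exact hs.2.2.2.2.1 h1
      · exact hs.2.2.2.2.2 h1
    · have hg' : g n = false := by simpa using hg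
      have hh : h n = true := by
        cases hn : h n
        · exact absurd (hg'.trans hn.symm) hne
        · rfl
      rw [hgt, hht] at hcomp
      simp [hg, hh] at hcomp
      rcases hcomp with h1 | h1
      · exact hs.2.2.2.2.2 h1
      · exact hs.2.2.2.2.1 h1
  funext n
  induction n using Nat.strong_induction_on with
  | _ n ih => exact key n ih

/-- If `A = p[T]` for a tree `T` on `ω × κ` with `|T| ≤ ℵ₁` and `|A| > ℵ₁`,
then `A` contains a perfect set. -/
theorem stmt3 (κ : Ordinal.{0}) (T : Set (List ℕ × List κ.ToType))
    (hT : IsTreeOn κ T) (hcard : Cardinal.mk T ≤ Cardinal.aleph 1)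
    (A : Set (ℕ → ℕ)) (hA : A = projT κ T)
    (hbig : Cardinal.aleph 1 < Cardinal.mk A) :
    ∃ C ⊆ A, Perfect C ∧ C.Nonempty := by
  have hbig' : Cardinal.aleph 1 < Cardinal.mk (projT κ T) := by rwa [hA] at hbig
  have hroot := root_mem_Sset hT hbig'
  have hne0 : Cardinal.mk (projT κ T) ≠ 0 := by
    intro h0
    rw [h0] at hbig'
    exact absurd hbig' (by simp)
  obtain ⟨⟨x0, f0, hx0⟩⟩ := Cardinal.mk_ne_zero_iff.1 hne0
  set c := f0 0 with hc
  have key : ∀ p : List ℕ × List κ.ToType,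
      ∃ qr : (List ℕ × List κ.ToType) × (List ℕ × List κ.ToType), p ∈ Sset T →
        (qr.1 ∈ Sset T ∧ qr.2 ∈ Sset T ∧ extN p qr.1 ∧ extN p qr.2 ∧
          ¬ (qr.1.1 <+: qr.2.1) ∧ ¬ (qr.2.1 <+: qr.1.1)) := by
    intro p
    by_cases hp : p ∈ Sset T
    · obtain ⟨q, hq, r, hr, h1, h2, h3, h4⟩ := splitting hT hcard hp
      exact ⟨(q, r), fun _ => ⟨hq, hr, h1, h2, h3, h4⟩⟩
    · exact ⟨(p, p), fun h => absurd h hp⟩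
  choose F hF using key
  have hgood : goodF T F := fun p hp => hF p hp
  set φ : (ℕ → Bool) → (ℕ → ℕ) := fun g => xseq F g with hφ
  have hcont : Continuous φ := by
    apply continuous_pi
    intro m
    rw [continuous_iff_continuousAt]
    intro g
    have hVo : IsOpen {h : ℕ → Bool | ∀ i ∈ Finset.range (m + 1), h i = g i} := by
      have he : {h : ℕ → Bool | ∀ i ∈ Finset.range (m + 1), h i = g i} =
          ⋂ i ∈ Finset.range (m + 1), (fun h : ℕ → Bool => h i) ⁻¹' {g i} := by
        ext h; simp
      rw [he]
      exact isOpen_biInter_finset fun i _ =>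
        (continuous_apply i).isOpen_preimage _ (isOpen_discrete _)
    have hV : {h : ℕ → Bool | ∀ i ∈ Finset.range (m + 1), h i = g i} ∈ nhds g :=
      hVo.mem_nhds (by simp)
    have hev : ∀ᶠ h in nhds g, φ g m = (fun h => φ h m) h := by
      filter_upwards [hV] with h hh
      have hD : Dfun F h (m + 1) = Dfun F g (m + 1) :=
        D_agree fun i hi => hh i (by simpa using hi)
      simp only [hφ, xseq, hD]
    exact Filter.Tendsto.congr' hev tendsto_const_nhds
  have hinj : Function.Injective φ := fun g h he => xseq_inj hroot hgood he
  refine ⟨Set.range φ, ?_, ⟨?_, ?_⟩, ⟨φ (fun _ => false), Set.mem_range_self _⟩⟩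
  · rintro _ ⟨g, rfl⟩
    rw [hA]
    exact xseq_mem hT hroot hgood c g
  · exact (isCompact_range hcont).isClosed
  · rintro x ⟨g, rfl⟩
    rw [accPt_iff_nhds]
    intro U hU
    set gs : ℕ → (ℕ → Bool) := fun n => Function.update g n (!(g n)) with hgs
    have hgs_ne : ∀ n, gs n ≠ g := by
      intro n he
      have := congrFun he n
      simp [hgs] at this
    have hten : Filter.Tendsto gs Filter.atTop (nhds g) := by
      rw [tendsto_pi_nhds]
      intro i
      apply Filter.Tendsto.congr' ?_ tendsto_const_nhds
      filter_upwards [Filter.eventually_gt_atTop i] with n hn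
      simp [hgs, Function.update_of_ne (by omega : i ≠ n)]
    have hφten := (hcont.tendsto g).comp hten
    obtain ⟨n, hn⟩ := (hφten.eventually_mem hU).exists
    refine ⟨φ (gs n), ⟨hn, ⟨gs n, rfl⟩⟩, ?_⟩
    intro he
    exact hgs_ne n (hinj he)



end Paper
end

section
/- (Well-definedness subclaim) In the setting above, if τ₁(c_{β_1},…,c_{β_n}) = τ₂(c_{β_k},…,c_{β_n}) holds in m', f(τ₁(c_1,…,c_n)) = σ₁(u_1,…,u_n) and f(τ₂(c_1,…,c_{n+1−k})) = σ₂(u_1,…,u_{n+1−k}), then σ₂(u_{β_k},…,u_{β_n}) = σ₁(u_{β_1},…,u_{β_n}); hence f_{ω₁} is well defined. -/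
open Cardinal FirstOrder

namespace Paper

/-- Indices for the `ω₁`-sequence of indiscernibles. -/
def Idx : Type 1 := {β : Ordinal.{0} // β < (Cardinal.aleph 1).ord}

noncomputable instance : LinearOrder Idx := inferInstanceAs (LinearOrder {β : Ordinal.{0} // β < _})

/-- The `n`-th natural index. -/
noncomputable def natIdx (n : ℕ) : Idx :=
  ⟨(n : Ordinal.{0}), lt_of_lt_of_le (Ordinal.nat_lt_omega0 n)
    (by simpa using Cardinal.ord_le_ord.2 (le_of_lt (Cardinal.aleph0_lt_aleph_one)))⟩

/-- The tuple of the first `n` natural indices `c_0 < ⋯ < c_{n-1}`. -/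
noncomputable def natTuple (n : ℕ) : Fin n → Idx := fun i => natIdx i

/-- The ordering of the ordinals of the model, as realized by the relation symbol `lt`. -/
def ltM (L : Language) (M : Type 1) [L.Structure M] (lt : L.Relations 2) (x y : M) : Prop :=
  Language.Structure.RelMap lt ![x, y]

/-- Well-definedness subclaim: if `τ₁(c_{β₁},…,c_{β_n}) = τ₂(c_{β_k},…,c_{β_n})` holds in the
Ehrenfeucht–Mostowski extension, `f(τ₁(c₁,…,c_n)) = σ₁(u₁,…,u_n)` and
`f(τ₂(c₁,…,c_{n+1-k})) = σ₂(u₁,…,u_{n+1-k})`, then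
`σ₂(u_{β_k},…,u_{β_n}) = σ₁(u_{β_1},…,u_{β_n})`; hence `f_{ω₁}` is well defined. -/
theorem stmt11 (L : Language) (M : Type 1) [L.Structure M] (lt : L.Relations 2)
    (c : Idx → M)
    (hindisc : ∀ (n : ℕ) (φ : L.Formula (Fin n)) (β γ : Fin n → Idx),
      StrictMono β → StrictMono γ → (φ.Realize (c ∘ β) ↔ φ.Realize (c ∘ γ)))
    (u : Idx → Ordinal.{0}) (hu : StrictMono u)
    (fam : ∀ m : ℕ, Set ((Fin m → Ordinal.{0}) → Ordinal.{0}))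
    (hufam : ∀ (m₁ m₂ : ℕ) (σ₁ : (Fin m₁ → Ordinal.{0}) → Ordinal.{0})
      (σ₂ : (Fin m₂ → Ordinal.{0}) → Ordinal.{0}), σ₁ ∈ fam m₁ → σ₂ ∈ fam m₂ →
      ∀ (a a' : Fin m₁ → Idx) (b b' : Fin m₂ → Idx),
        StrictMono a → StrictMono a' → StrictMono b → StrictMono b' →
        (∀ i j, (a i < b j ↔ a' i < b' j) ∧ (b j < a i ↔ b' j < a' i) ∧
          (a i = b j ↔ a' i = b' j)) →
        (σ₁ (u ∘ a) = σ₂ (u ∘ b) ↔ σ₁ (u ∘ a') = σ₂ (u ∘ b')))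
    (f : M → Ordinal.{0})
    (hshift : ∀ (n : ℕ) (t : L.Term (Fin n)) (m : ℕ) (hm : m ≤ n)
      (σ : (Fin m → Ordinal.{0}) → Ordinal.{0}), σ ∈ fam m →
      f (t.realize (c ∘ natTuple n)) = σ (u ∘ natTuple m) →
      ∀ l : Fin n → ℕ, StrictMono l →
        f (t.realize (c ∘ fun i : Fin n => natIdx (l i))) =
          σ (fun j : Fin m => u (natIdx (l (Fin.castLE hm j)))))
    (n k : ℕ) (hk : 0 < k) (hkn : k ≤ n)
    (t₁ : L.Term (Fin n)) (t₂ : L.Term (Fin (n + 1 - k)))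
    (β : Fin n → Idx) (hβ : StrictMono β)
    -- `τ₁(c_{β₁},…,c_{β_n}) = τ₂(c_{β_k},…,c_{β_n})` in `m'`
    (heq : t₁.realize (c ∘ β) =
      t₂.realize (c ∘ fun j : Fin (n + 1 - k) => β ⟨k - 1 + j.1, by omega⟩))
    (σ₁ : (Fin n → Ordinal.{0}) → Ordinal.{0}) (hσ₁ : σ₁ ∈ fam n)
    (σ₂ : (Fin (n + 1 - k) → Ordinal.{0}) → Ordinal.{0}) (hσ₂ : σ₂ ∈ fam (n + 1 - k))
    (hf₁ : f (t₁.realize (c ∘ natTuple n)) = σ₁ (u ∘ natTuple n))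
    (hf₂ : f (t₂.realize (c ∘ natTuple (n + 1 - k))) = σ₂ (u ∘ natTuple (n + 1 - k))) :
    σ₂ (fun j : Fin (n + 1 - k) => u (β ⟨k - 1 + j.1, by omega⟩)) =
      σ₁ (fun i : Fin n => u (β i)) := by
  classical
  have natIdx_lt : ∀ a b : ℕ, natIdx a < natIdx b ↔ a < b := by
    intro a b
    constructor
    · intro h
      have : ((a : Ordinal.{0})) < (b : Ordinal.{0}) := h
      exact_mod_cast this
    · intro h
      show ((a : Ordinal.{0})) < (b : Ordinal.{0})
      exact_mod_cast h
  have natIdx_eq : ∀ a b : ℕ, natIdx a = natIdx b ↔ a = b := by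
    intro a b
    constructor
    · intro h
      have : ((a : Ordinal.{0})) = (b : Ordinal.{0}) := congrArg Subtype.val h
      exact_mod_cast this
    · rintro rfl; rfl
  have natTuple_mono : ∀ m, StrictMono (natTuple m) := by
    intro m i j hij
    exact (natIdx_lt _ _).2 hij
  have hρ : ∀ j : Fin (n + 1 - k), k - 1 + j.1 < n := fun j => by omega
  set ρ : Fin (n + 1 - k) → Fin n := fun j => ⟨k - 1 + j.1, hρ j⟩ with hρdef
  -- Step 1: transfer `heq` from `β` to the natural tuple via indiscernibility.
  have h1 : t₁.realize (c ∘ natTuple n) =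
      t₂.realize (c ∘ fun j => natTuple n (ρ j)) := by
    have hφ := hindisc n (Language.Term.equal t₁ (t₂.relabel ρ)) β (natTuple n)
      hβ (natTuple_mono n)
    have hβside : (Language.Term.equal t₁ (t₂.relabel ρ)).Realize (c ∘ β) := by
      rw [Language.Formula.realize_equal, Language.Term.realize_relabel]
      exact heq
    have := hφ.1 hβside
    rwa [Language.Formula.realize_equal, Language.Term.realize_relabel] at this
  -- Step 2: use the shift property for `t₂` with `l j = k - 1 + j`.
  have hl : StrictMono (fun j : Fin (n + 1 - k) => k - 1 + j.1) := by
    intro i j hij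
    have hij' : i.1 < j.1 := hij
    show k - 1 + i.1 < k - 1 + j.1
    omega
  have h2 := hshift (n + 1 - k) t₂ (n + 1 - k) le_rfl σ₂ hσ₂ hf₂
    (fun j => k - 1 + j.1) hl
  -- Combine: σ₁ at natural indices equals σ₂ at shifted natural indices.
  have h3 : σ₁ (u ∘ natTuple n) = σ₂ (u ∘ fun j => natTuple n (ρ j)) := by
    rw [← hf₁, h1]
    exact h2
  -- Step 3: joint indiscernibility of the `u`s transfers this to `β`.
  have hρlt : ∀ i j : Fin (n + 1 - k), i < j → ρ i < ρ j := by
    intro i j hij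
    have hij' : i.1 < j.1 := hij
    show (⟨k - 1 + i.1, hρ i⟩ : Fin n) < ⟨k - 1 + j.1, hρ j⟩
    exact Fin.mk_lt_mk.2 (by omega)
  have hb' : StrictMono (fun j : Fin (n + 1 - k) => β (ρ j)) := by
    intro i j hij
    exact hβ (hρlt i j hij)
  have hbmono : StrictMono (fun j : Fin (n + 1 - k) => natTuple n (ρ j)) := by
    intro i j hij
    have hij' : i.1 < j.1 := hij
    show natIdx (k - 1 + i.1) < natIdx (k - 1 + j.1)
    exact (natIdx_lt _ _).2 (by omega)
  have key := hufam n (n + 1 - k) σ₁ σ₂ hσ₁ hσ₂ (natTuple n) β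
    (fun j => natTuple n (ρ j)) (fun j => β (ρ j)) (natTuple_mono n) hβ hbmono hb'
    (by
      intro i j
      refine ⟨?_, ?_, ?_⟩
      · show natIdx i.1 < natIdx (ρ j).1 ↔ β i < β (ρ j)
        rw [natIdx_lt, hβ.lt_iff_lt]
        exact Fin.lt_def.symm
      · show natIdx (ρ j).1 < natIdx i.1 ↔ β (ρ j) < β i
        rw [natIdx_lt, hβ.lt_iff_lt]
        exact Fin.lt_def.symm
      · show natIdx i.1 = natIdx (ρ j).1 ↔ β i = β (ρ j)
        rw [natIdx_eq, hβ.injective.eq_iff]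
        exact Fin.ext_iff.symm)
  exact (key.1 h3).symm

end Paper
end
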